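/- The simple graph G on vertex set {1,2,3,4,5,6,7} with edge set {{1,2},{1,5},{1,7},{2,3},{2,6},{3,4},{3,6},{4,5},{4,6},{4,7}} (graph number 721 in the Atlas of Graphs) has minimum rank 3 over the real numbers. -/

import Mathlib

/-- Edge list of graph number 721 in the Atlas of Graphs (vertices 1..7). -/
def atlas721Edges : List (ℕ × ℕ) := [(1,2),(1,5),(1,7),(2,3),(2,6),(3,4),(3,6),(4,5),(4,6),(4,7)]

open Matrix

@[simp] lemma my_cons_val_five {α} {n} (x : α) (u : Fin (n+5) → α) :
    Matrix.vecCons x u 5 = u 4 := rfl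
@[simp] lemma my_cons_val_six {α} {n} (x : α) (u : Fin (n+6) → α) :
    Matrix.vecCons x u 6 = u 5 := rfl

lemma rank_submatrix_le' (f g : Fin 3 → Fin 7) (A : Matrix (Fin 7) (Fin 7) ℝ) :
    (A.submatrix f g).rank ≤ A.rank := by
  have h : A.submatrix f g =
      ((1 : Matrix (Fin 7) (Fin 7) ℝ).submatrix f (Equiv.refl _)) * A *
        ((1 : Matrix (Fin 7) (Fin 7) ℝ).submatrix (Equiv.refl _) g) := by
    rw [Matrix.one_submatrix_mul, Matrix.mul_submatrix_one]
    simp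
  rw [h]
  exact le_trans (Matrix.rank_mul_le_left _ _) (Matrix.rank_mul_le_right _ _)

/-- The certificate matrix factors. -/
noncomputable def atlasB : Matrix (Fin 7) (Fin 3) ℝ :=
  !![-2,-2,-2; -2,-2,2; -2,1,-1; -2,2,0; 0,-2,2; -2,1,-1; 0,-2,2]

noncomputable def atlasS : Matrix (Fin 3) (Fin 3) ℝ := !![1,0,0; 0,1,0; 0,0,-1]

noncomputable def atlasA : Matrix (Fin 7) (Fin 7) ℝ := atlasB * atlasS * atlasBᵀ

set_option maxHeartbeats 2000000 in
lemma atlasA_eq : atlasA =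
    !![4,12,0,0,8,0,8;
       12,4,4,0,0,4,0;
       0,4,4,6,0,4,0;
       0,0,6,8,-4,6,-4;
       8,0,0,-4,0,0,0;
       0,4,4,6,0,4,0;
       8,0,0,-4,0,0,0] := by
  ext i j
  fin_cases i <;> fin_cases j <;>
    simp [atlasA, atlasB, atlasS, Matrix.mul_apply, Matrix.transpose_apply, Fin.sum_univ_three, Matrix.vecHead, Matrix.vecTail] <;> norm_num

set_option maxHeartbeats 4000000 in
/-- Graph number 721 in the Atlas of Graphs has minimum rank 3 over the reals:
3 is the least element of the set of ranks of real symmetric 7×7 matrices whose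
off-diagonal zero/nonzero pattern matches the edges of the graph. -/
theorem atlas721_minRank_eq_three :
    IsLeast {r : ℕ | ∃ A : Matrix (Fin 7) (Fin 7) ℝ, A.IsSymm ∧
        (∀ i j : Fin 7, i ≠ j →
          (A i j ≠ 0 ↔
            ((i.val + 1, j.val + 1) ∈ atlas721Edges ∨
             (j.val + 1, i.val + 1) ∈ atlas721Edges))) ∧
        A.rank = r} 3 := by
  constructor
  · -- membership: atlasA works
    refine ⟨atlasA, ?_, ?_, ?_⟩
    · show atlasAᵀ = atlasA
      rw [atlasA_eq]
      ext i j
      fin_cases i <;> fin_cases j <;> simp [Matrix.vecHead, Matrix.vecTail]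
    · intro i j hij
      rw [atlasA_eq]
      fin_cases i <;> fin_cases j <;>
        simp_all [atlas721Edges, Matrix.vecHead, Matrix.vecTail] <;> norm_num
    · -- rank atlasA = 3
      refine le_antisymm ?_ ?_
      · calc atlasA.rank ≤ (atlasB * atlasS).rank := Matrix.rank_mul_le_left _ _
          _ ≤ Fintype.card (Fin 3) := Matrix.rank_le_card_width _
          _ = 3 := by simp
      · -- lower bound via nonzero 3×3 minor
        have h := rank_submatrix_le' ![0,1,2] ![1,2,3] atlasA
        have hdet : (atlasA.submatrix ![0,1,2] ![1,2,3]).det ≠ 0 := by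
          rw [atlasA_eq]
          rw [Matrix.det_fin_three]
          simp [Matrix.submatrix_apply, Matrix.cons_val]
        have hunit : IsUnit (atlasA.submatrix ![0,1,2] ![1,2,3]) := by
          rw [Matrix.isUnit_iff_isUnit_det]
          exact hdet.isUnit
        have := Matrix.rank_of_isUnit _ hunit
        simp only [Fintype.card_fin] at this
        omega
  · -- lower bound for the set
    rintro r ⟨A, _hsymm, hpat, hrank⟩
    have h01 : A 0 1 ≠ 0 := by
      rw [hpat 0 1 (by decide)]; left; decide
    have h12 : A 1 2 ≠ 0 := by
      rw [hpat 1 2 (by decide)]; left; decide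
    have h23 : A 2 3 ≠ 0 := by
      rw [hpat 2 3 (by decide)]; left; decide
    have h02 : A 0 2 = 0 := by
      by_contra h
      have := (hpat 0 2 (by decide)).mp h
      revert this; decide
    have h03 : A 0 3 = 0 := by
      by_contra h
      have := (hpat 0 3 (by decide)).mp h
      revert this; decide
    have h13 : A 1 3 = 0 := by
      by_contra h
      have := (hpat 1 3 (by decide)).mp h
      revert this; decide
    have hdet : (A.submatrix ![0,1,2] ![1,2,3]).det ≠ 0 := by
      have e : (A.submatrix ![0,1,2] ![1,2,3]).det = A 0 1 * (A 1 2 * A 2 3) := by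
        rw [Matrix.det_fin_three]
        simp [Matrix.submatrix_apply, Matrix.vecHead, Matrix.vecTail, h02, h03, h13, mul_assoc]
      rw [e]
      exact mul_ne_zero h01 (mul_ne_zero h12 h23)
    have hunit : IsUnit (A.submatrix ![0,1,2] ![1,2,3]) := by
      rw [Matrix.isUnit_iff_isUnit_det]
      exact hdet.isUnit
    have h3 := Matrix.rank_of_isUnit _ hunit
    have hle := rank_submatrix_le' ![0,1,2] ![1,2,3] A
    simp only [Fintype.card_fin] at h3
    omega
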